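/- For every s ≥ 1 and every η ∈ (0,1/4), ∫₀^∞ e^{-θ} min(e^{2θ - 2πs(1-2η)/θ}, 1) dθ ≤ ((πs)^{1/2} + 1) e^{-(πs(1-2η))^{1/2}}. -/

import Mathlib

open Real Set MeasureTheory

/-- For `s ≥ 1` and `η ∈ (0,1/4)`,
`∫₀^∞ e^{-θ} min(e^{2θ - 2πs(1-2η)/θ}, 1) dθ ≤ ((πs)^{1/2} + 1) e^{-(πs(1-2η))^{1/2}}`. -/
theorem integral_exp_min_bound (s η : ℝ) (hs : 1 ≤ s) (hη : η ∈ Set.Ioo (0 : ℝ) (1 / 4)) :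
    (∫ θ in Set.Ioi (0 : ℝ),
        Real.exp (-θ) * min (Real.exp (2 * θ - 2 * π * s * (1 - 2 * η) / θ)) 1)
      ≤ (Real.sqrt (π * s) + 1) * Real.exp (-Real.sqrt (π * s * (1 - 2 * η))) := by
  obtain ⟨hη0, hη4⟩ := hη
  have hπ : (0:ℝ) < π := Real.pi_pos
  have h1 : (0:ℝ) < 1 - 2 * η := by linarith
  have hcpos : 0 < π * s * (1 - 2 * η) := by positivity
  set c : ℝ := π * s * (1 - 2 * η) with hc
  set T : ℝ := Real.sqrt c with hTdef
  have hTpos : 0 < T := Real.sqrt_pos.mpr hcpos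
  have hT2 : T * T = c := Real.mul_self_sqrt hcpos.le
  set f : ℝ → ℝ := fun θ => Real.exp (-θ) * min (Real.exp (2 * θ - 2 * π * s * (1 - 2 * η) / θ)) 1
    with hf
  have hf_nonneg : ∀ θ, 0 ≤ f θ := by
    intro θ
    apply mul_nonneg (Real.exp_nonneg _)
    exact le_min (Real.exp_nonneg _) zero_le_one
  have hf_le : ∀ θ, f θ ≤ Real.exp (-θ) := by
    intro θ
    calc f θ ≤ Real.exp (-θ) * 1 := by
          exact mul_le_mul_of_nonneg_left (min_le_right _ _) (Real.exp_nonneg _)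
      _ = Real.exp (-θ) := mul_one _
  have hmeas : Measurable f := by fun_prop
  have hexp_int : IntegrableOn (fun θ : ℝ => Real.exp (-θ)) (Ioi 0) := by
    have := exp_neg_integrableOn_Ioi 0 (one_pos)
    simpa using this
  have hf_int : IntegrableOn f (Ioi 0) := by
    apply Integrable.mono' hexp_int hmeas.aestronglyMeasurable
    filter_upwards with θ
    rw [Real.norm_eq_abs, abs_of_nonneg (hf_nonneg θ)]
    exact hf_le θ
  have hf_int1 : IntegrableOn f (Ioc 0 T) := hf_int.mono_set Ioc_subset_Ioi_self
  have hf_int2 : IntegrableOn f (Ioi T) := hf_int.mono_set (Ioi_subset_Ioi hTpos.le)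
  -- bound on Ioc 0 T
  have hbound1 : ∀ θ ∈ Ioc (0:ℝ) T, f θ ≤ Real.exp (-T) := by
    intro θ ⟨hθ0, hθT⟩
    calc f θ ≤ Real.exp (-θ) * Real.exp (2 * θ - 2 * π * s * (1 - 2 * η) / θ) :=
          mul_le_mul_of_nonneg_left (min_le_left _ _) (Real.exp_nonneg _)
      _ = Real.exp (θ - 2 * c / θ) := by
          rw [← Real.exp_add]; congr 1; rw [hc]; ring
      _ ≤ Real.exp (-T) := by
          apply Real.exp_le_exp.mpr
          have h2 : 2 * c / T ≤ 2 * c / θ :=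
            div_le_div_of_nonneg_left (by positivity) hθ0 hθT
          have h3 : 2 * c / T = 2 * T := by
            field_simp
            nlinarith [hT2]
          nlinarith [h2, h3]
  have hsplit : (∫ θ in Ioi (0:ℝ), f θ)
      = (∫ θ in Ioc (0:ℝ) T, f θ) + ∫ θ in Ioi T, f θ := by
    rw [← Ioc_union_Ioi_eq_Ioi hTpos.le,
      setIntegral_union (Ioc_disjoint_Ioi le_rfl) measurableSet_Ioi hf_int1 hf_int2]
  have hI1 : (∫ θ in Ioc (0:ℝ) T, f θ) ≤ Real.sqrt (π * s) * Real.exp (-T) := by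
    have : (∫ θ in Ioc (0:ℝ) T, f θ) ≤ ∫ _ in Ioc (0:ℝ) T, Real.exp (-T) := by
      apply setIntegral_mono_on hf_int1 (integrableOn_const measure_Ioc_lt_top.ne)
        measurableSet_Ioc hbound1
    rw [setIntegral_const, Real.volume_real_Ioc_of_le hTpos.le, smul_eq_mul] at this
    have hTle : T ≤ Real.sqrt (π * s) := by
      apply Real.sqrt_le_sqrt
      nlinarith
    calc (∫ θ in Ioc (0:ℝ) T, f θ) ≤ (T - 0) * Real.exp (-T) := this
      _ ≤ Real.sqrt (π * s) * Real.exp (-T) := by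
          apply mul_le_mul_of_nonneg_right _ (Real.exp_nonneg _)
          linarith
  have hI2 : (∫ θ in Ioi T, f θ) ≤ Real.exp (-T) := by
    have : (∫ θ in Ioi T, f θ) ≤ ∫ θ in Ioi T, Real.exp (-θ) := by
      apply setIntegral_mono_on hf_int2 (hexp_int.mono_set (Ioi_subset_Ioi hTpos.le))
        measurableSet_Ioi
      intro θ _; exact hf_le θ
    rwa [integral_exp_neg_Ioi] at this
  calc (∫ θ in Ioi (0:ℝ), f θ)
      = (∫ θ in Ioc (0:ℝ) T, f θ) + ∫ θ in Ioi T, f θ := hsplit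
    _ ≤ Real.sqrt (π * s) * Real.exp (-T) + Real.exp (-T) := add_le_add hI1 hI2
    _ = (Real.sqrt (π * s) + 1) * Real.exp (-T) := by ring
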